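/- L⁴ interpolation (Ladyzhenskaya inequality) in 2D: there is an absolute constant C such that for all f in the Schwartz class on ℝ², ‖f‖_{L⁴(ℝ²)} ≤ C ‖f‖_{L²(ℝ²)}^{1/2} ‖∇f‖_{L²(ℝ²)}^{1/2}. -/

import Mathlib

open MeasureTheory Real Set Filter

lemma inv_one_add_sq_tendsto : Filter.Tendsto (fun t : ℝ => (1 + t ^ 2)⁻¹) atBot (nhds 0) := by
  have h2 : Filter.Tendsto (fun t : ℝ => 1 + t ^ 2) atBot atTop := by
    apply tendsto_atTop_add_const_left
    have h := (tendsto_id (x := atBot (α := ℝ))).atBot_mul_atBot₀ tendsto_id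
    simpa [sq] using h
  exact h2.inv_tendsto_atTop

lemma slice_bound_fst (f : SchwartzMap (ℝ × ℝ) ℝ) {M C1 : ℝ}
    (hM : ∀ z : ℝ × ℝ, (1 + ‖z‖ ^ 2) * |f z| ≤ M)
    (hC1 : ∀ z : ℝ × ℝ, ‖fderiv ℝ (⇑f) z‖ ≤ C1)
    (x y : ℝ) :
    f (x, y) ^ 2 ≤ ∫ t : ℝ, 2 * |f (t, y)| * ‖fderiv ℝ (⇑f) (t, y)‖ := by
  have hC1' : 0 ≤ C1 := le_trans (norm_nonneg _) (hC1 0)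
  -- pointwise decay bound along the slice
  have hfb : ∀ t : ℝ, |f (t, y)| ≤ M * (1 + t ^ 2)⁻¹ := by
    intro t
    have h1 : (1 + t ^ 2) * |f (t, y)| ≤ M := by
      refine le_trans ?_ (hM (t, y))
      have ht : |t| ≤ ‖((t, y) : ℝ × ℝ)‖ := norm_fst_le ((t, y) : ℝ × ℝ)
      have ht2 : t ^ 2 ≤ ‖((t, y) : ℝ × ℝ)‖ ^ 2 := by
        rw [← sq_abs t]; exact pow_le_pow_left₀ (abs_nonneg t) ht 2
      nlinarith [abs_nonneg (f (t, y))]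
    have hpos : (0:ℝ) < 1 + t ^ 2 := by positivity
    have h2 : |f (t, y)| * (1 + t ^ 2) ≤ M := by rw [mul_comm]; exact h1
    have h3 := (le_div_iff₀ hpos).mpr h2
    simpa [div_eq_mul_inv, mul_comm] using h3
  -- the line t ↦ (t, y) and derivatives
  have hd : ∀ t : ℝ, HasDerivAt (fun t : ℝ => f (t, y)) (fderiv ℝ (⇑f) (t, y) (1, 0)) t := by
    intro t
    have hline : HasDerivAt (fun t : ℝ => ((t, y) : ℝ × ℝ)) ((1 : ℝ), (0 : ℝ)) t :=
      (hasDerivAt_id t).prodMk (hasDerivAt_const t y)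
    have hf' : HasFDerivAt (⇑f) (fderiv ℝ (⇑f) (t, y)) (t, y) :=
      (((f.smooth 1).differentiable one_ne_zero) (t, y)).hasFDerivAt
    exact hf'.comp_hasDerivAt t hline
  have hg2 : ∀ t : ℝ, HasDerivAt (fun t : ℝ => f (t, y) ^ 2)
      (2 * f (t, y) * fderiv ℝ (⇑f) (t, y) (1, 0)) t := by
    intro t
    simpa using (hd t).fun_pow 2
  have h10 : ‖((1 : ℝ), (0 : ℝ))‖ = 1 := by simp [Prod.norm_def]
  have hDle : ∀ t : ℝ, |fderiv ℝ (⇑f) (t, y) (1, 0)| ≤ ‖fderiv ℝ (⇑f) (t, y)‖ := by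
    intro t
    simpa [h10] using (fderiv ℝ (⇑f) (t, y)).le_opNorm ((1 : ℝ), (0 : ℝ))
  -- continuity
  have lc : Continuous fun t : ℝ => ((t, y) : ℝ × ℝ) := continuous_id.prodMk continuous_const
  have contDf : Continuous fun z : ℝ × ℝ => fderiv ℝ (⇑f) z :=
    (f.smooth ⊤).continuous_fderiv (by simp)
  have contφ : Continuous fun t : ℝ => 2 * f (t, y) * fderiv ℝ (⇑f) (t, y) (1, 0) :=
    ((continuous_const.mul (f.continuous.comp lc)).mul
      ((contDf.comp lc).clm_apply continuous_const))
  have conth : Continuous fun t : ℝ => 2 * |f (t, y)| * ‖fderiv ℝ (⇑f) (t, y)‖ :=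
    ((continuous_const.mul (f.continuous.comp lc).abs).mul (contDf.comp lc).norm)
  -- integrable majorant
  have hmaj : Integrable (fun t : ℝ => 2 * C1 * M * (1 + t ^ 2)⁻¹) volume :=
    integrable_inv_one_add_sq.const_mul _
  have hbound : ∀ t : ℝ, 2 * |f (t, y)| * ‖fderiv ℝ (⇑f) (t, y)‖ ≤ 2 * C1 * M * (1 + t ^ 2)⁻¹ := by
    intro t
    have h1 := hfb t
    have h2 := hC1 (t, y)
    have h3 : (0:ℝ) ≤ (1 + t ^ 2)⁻¹ := by positivity
    nlinarith [abs_nonneg (f (t, y)), norm_nonneg (fderiv ℝ (⇑f) (t, y))]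
  have hh_int : Integrable (fun t : ℝ => 2 * |f (t, y)| * ‖fderiv ℝ (⇑f) (t, y)‖) volume := by
    refine hmaj.mono' conth.aestronglyMeasurable (Filter.Eventually.of_forall fun t => ?_)
    have : (0:ℝ) ≤ 2 * |f (t, y)| * ‖fderiv ℝ (⇑f) (t, y)‖ := by positivity
    rw [Real.norm_of_nonneg this]; exact hbound t
  have hφabs : ∀ t : ℝ, |2 * f (t, y) * fderiv ℝ (⇑f) (t, y) (1, 0)|
      ≤ 2 * |f (t, y)| * ‖fderiv ℝ (⇑f) (t, y)‖ := by
    intro t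
    rw [abs_mul, abs_mul]
    have := hDle t
    have h0 : |(2:ℝ)| = 2 := by norm_num
    rw [h0]
    have := mul_le_mul_of_nonneg_left (hDle t) (by positivity : (0:ℝ) ≤ 2 * |f (t, y)|)
    nlinarith [abs_nonneg (f (t, y))]
  have hφ_int : Integrable (fun t : ℝ => 2 * f (t, y) * fderiv ℝ (⇑f) (t, y) (1, 0)) volume := by
    refine hmaj.mono' contφ.aestronglyMeasurable (Filter.Eventually.of_forall fun t => ?_)
    exact le_trans (hφabs t) (hbound t)
  -- limit at -∞
  have htend : Filter.Tendsto (fun t : ℝ => f (t, y) ^ 2) atBot (nhds 0) := by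
    have h0 : Filter.Tendsto (fun t : ℝ => f (t, y)) atBot (nhds 0) := by
      refine squeeze_zero_norm (fun t => ?_) (by simpa using inv_one_add_sq_tendsto.const_mul M :
        Filter.Tendsto (fun t : ℝ => M * (1 + t ^ 2)⁻¹) atBot (nhds 0))
      rw [Real.norm_eq_abs]; exact hfb t
    simpa using h0.pow 2
  -- FTC
  have key : ∫ t in Iic x, 2 * f (t, y) * fderiv ℝ (⇑f) (t, y) (1, 0)
      = f (x, y) ^ 2 - 0 :=
    integral_Iic_of_hasDerivAt_of_tendsto' (fun t _ => hg2 t) hφ_int.integrableOn htend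
  rw [sub_zero] at key
  calc f (x, y) ^ 2 = ∫ t in Iic x, 2 * f (t, y) * fderiv ℝ (⇑f) (t, y) (1, 0) := key.symm
    _ ≤ ∫ t in Iic x, 2 * |f (t, y)| * ‖fderiv ℝ (⇑f) (t, y)‖ := by
        refine setIntegral_mono hφ_int.integrableOn hh_int.integrableOn fun t => ?_
        exact le_trans (le_abs_self _) (hφabs t)
    _ ≤ ∫ t : ℝ, 2 * |f (t, y)| * ‖fderiv ℝ (⇑f) (t, y)‖ := by
        refine setIntegral_le_integral hh_int (Filter.Eventually.of_forall fun t => ?_)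
        positivity


lemma slice_bound_snd (f : SchwartzMap (ℝ × ℝ) ℝ) {M C1 : ℝ}
    (hM : ∀ z : ℝ × ℝ, (1 + ‖z‖ ^ 2) * |f z| ≤ M)
    (hC1 : ∀ z : ℝ × ℝ, ‖fderiv ℝ (⇑f) z‖ ≤ C1)
    (x y : ℝ) :
    f (x, y) ^ 2 ≤ ∫ t : ℝ, 2 * |f (x, t)| * ‖fderiv ℝ (⇑f) (x, t)‖ := by
  have hC1' : 0 ≤ C1 := le_trans (norm_nonneg _) (hC1 0)
  -- pointwise decay bound along the slice
  have hfb : ∀ t : ℝ, |f (x, t)| ≤ M * (1 + t ^ 2)⁻¹ := by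
    intro t
    have h1 : (1 + t ^ 2) * |f (x, t)| ≤ M := by
      refine le_trans ?_ (hM (x, t))
      have ht : |t| ≤ ‖((x, t) : ℝ × ℝ)‖ := norm_snd_le ((x, t) : ℝ × ℝ)
      have ht2 : t ^ 2 ≤ ‖((x, t) : ℝ × ℝ)‖ ^ 2 := by
        rw [← sq_abs t]; exact pow_le_pow_left₀ (abs_nonneg t) ht 2
      nlinarith [abs_nonneg (f (x, t))]
    have hpos : (0:ℝ) < 1 + t ^ 2 := by positivity
    have h2 : |f (x, t)| * (1 + t ^ 2) ≤ M := by rw [mul_comm]; exact h1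
    have h3 := (le_div_iff₀ hpos).mpr h2
    simpa [div_eq_mul_inv, mul_comm] using h3
  -- the line t ↦ (x, t) and derivatives
  have hd : ∀ t : ℝ, HasDerivAt (fun t : ℝ => f (x, t)) (fderiv ℝ (⇑f) (x, t) (0, 1)) t := by
    intro t
    have hline : HasDerivAt (fun t : ℝ => ((x, t) : ℝ × ℝ)) ((0 : ℝ), (1 : ℝ)) t :=
      (hasDerivAt_const t x).prodMk (hasDerivAt_id t)
    have hf' : HasFDerivAt (⇑f) (fderiv ℝ (⇑f) (x, t)) (x, t) :=
      (((f.smooth 1).differentiable one_ne_zero) (x, t)).hasFDerivAt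
    exact hf'.comp_hasDerivAt t hline
  have hg2 : ∀ t : ℝ, HasDerivAt (fun t : ℝ => f (x, t) ^ 2)
      (2 * f (x, t) * fderiv ℝ (⇑f) (x, t) (0, 1)) t := by
    intro t
    simpa using (hd t).fun_pow 2
  have h10 : ‖((0 : ℝ), (1 : ℝ))‖ = 1 := by simp [Prod.norm_def]
  have hDle : ∀ t : ℝ, |fderiv ℝ (⇑f) (x, t) (0, 1)| ≤ ‖fderiv ℝ (⇑f) (x, t)‖ := by
    intro t
    simpa [h10] using (fderiv ℝ (⇑f) (x, t)).le_opNorm ((0 : ℝ), (1 : ℝ))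
  -- continuity
  have lc : Continuous fun t : ℝ => ((x, t) : ℝ × ℝ) := continuous_const.prodMk continuous_id
  have contDf : Continuous fun z : ℝ × ℝ => fderiv ℝ (⇑f) z :=
    (f.smooth ⊤).continuous_fderiv (by simp)
  have contφ : Continuous fun t : ℝ => 2 * f (x, t) * fderiv ℝ (⇑f) (x, t) (0, 1) :=
    ((continuous_const.mul (f.continuous.comp lc)).mul
      ((contDf.comp lc).clm_apply continuous_const))
  have conth : Continuous fun t : ℝ => 2 * |f (x, t)| * ‖fderiv ℝ (⇑f) (x, t)‖ :=
    ((continuous_const.mul (f.continuous.comp lc).abs).mul (contDf.comp lc).norm)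
  -- integrable majorant
  have hmaj : Integrable (fun t : ℝ => 2 * C1 * M * (1 + t ^ 2)⁻¹) volume :=
    integrable_inv_one_add_sq.const_mul _
  have hbound : ∀ t : ℝ, 2 * |f (x, t)| * ‖fderiv ℝ (⇑f) (x, t)‖ ≤ 2 * C1 * M * (1 + t ^ 2)⁻¹ := by
    intro t
    have h1 := hfb t
    have h2 := hC1 (x, t)
    have h3 : (0:ℝ) ≤ (1 + t ^ 2)⁻¹ := by positivity
    nlinarith [abs_nonneg (f (x, t)), norm_nonneg (fderiv ℝ (⇑f) (x, t))]
  have hh_int : Integrable (fun t : ℝ => 2 * |f (x, t)| * ‖fderiv ℝ (⇑f) (x, t)‖) volume := by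
    refine hmaj.mono' conth.aestronglyMeasurable (Filter.Eventually.of_forall fun t => ?_)
    have : (0:ℝ) ≤ 2 * |f (x, t)| * ‖fderiv ℝ (⇑f) (x, t)‖ := by positivity
    rw [Real.norm_of_nonneg this]; exact hbound t
  have hφabs : ∀ t : ℝ, |2 * f (x, t) * fderiv ℝ (⇑f) (x, t) (0, 1)|
      ≤ 2 * |f (x, t)| * ‖fderiv ℝ (⇑f) (x, t)‖ := by
    intro t
    rw [abs_mul, abs_mul]
    have := hDle t
    have h0 : |(2:ℝ)| = 2 := by norm_num
    rw [h0]
    have := mul_le_mul_of_nonneg_left (hDle t) (by positivity : (0:ℝ) ≤ 2 * |f (x, t)|)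
    nlinarith [abs_nonneg (f (x, t))]
  have hφ_int : Integrable (fun t : ℝ => 2 * f (x, t) * fderiv ℝ (⇑f) (x, t) (0, 1)) volume := by
    refine hmaj.mono' contφ.aestronglyMeasurable (Filter.Eventually.of_forall fun t => ?_)
    exact le_trans (hφabs t) (hbound t)
  -- limit at -∞
  have htend : Filter.Tendsto (fun t : ℝ => f (x, t) ^ 2) atBot (nhds 0) := by
    have h0 : Filter.Tendsto (fun t : ℝ => f (x, t)) atBot (nhds 0) := by
      refine squeeze_zero_norm (fun t => ?_) (by simpa using inv_one_add_sq_tendsto.const_mul M :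
        Filter.Tendsto (fun t : ℝ => M * (1 + t ^ 2)⁻¹) atBot (nhds 0))
      rw [Real.norm_eq_abs]; exact hfb t
    simpa using h0.pow 2
  -- FTC
  have key : ∫ t in Iic y, 2 * f (x, t) * fderiv ℝ (⇑f) (x, t) (0, 1)
      = f (x, y) ^ 2 - 0 :=
    integral_Iic_of_hasDerivAt_of_tendsto' (fun t _ => hg2 t) hφ_int.integrableOn htend
  rw [sub_zero] at key
  calc f (x, y) ^ 2 = ∫ t in Iic y, 2 * f (x, t) * fderiv ℝ (⇑f) (x, t) (0, 1) := key.symm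
    _ ≤ ∫ t in Iic y, 2 * |f (x, t)| * ‖fderiv ℝ (⇑f) (x, t)‖ := by
        refine setIntegral_mono hφ_int.integrableOn hh_int.integrableOn fun t => ?_
        exact le_trans (le_abs_self _) (hφabs t)
    _ ≤ ∫ t : ℝ, 2 * |f (x, t)| * ‖fderiv ℝ (⇑f) (x, t)‖ := by
        refine setIntegral_le_integral hh_int (Filter.Eventually.of_forall fun t => ?_)
        positivity

set_option maxHeartbeats 1000000 in
/-- Ladyzhenskaya's inequality in 2D: there is an absolute constant `C` such that for
Schwartz `f` on `ℝ²`, `‖f‖_{L⁴} ≤ C ‖f‖_{L²}^{1/2} ‖∇f‖_{L²}^{1/2}`. -/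
theorem ladyzhenskaya_2d :
    ∃ C > (0:ℝ), ∀ f : SchwartzMap (ℝ × ℝ) ℝ,
      (∫ x : ℝ × ℝ, |f x| ^ 4) ^ ((1:ℝ)/4)
        ≤ C * (∫ x : ℝ × ℝ, f x ^ 2) ^ ((1:ℝ)/4)
            * (∫ x : ℝ × ℝ, ‖fderiv ℝ (⇑f) x‖ ^ 2) ^ ((1:ℝ)/4) := by
  refine ⟨2, by norm_num, fun f => ?_⟩
  -- decay constants
  obtain ⟨C0, hC0pos, hC0⟩ := f.decay 0 0
  obtain ⟨C2, hC2pos, hC2⟩ := f.decay 2 0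
  have habs : ∀ z : ℝ × ℝ, |f z| ≤ C0 := by
    intro z
    have h0 := hC0 z
    simpa [norm_iteratedFDeriv_zero, Real.norm_eq_abs] using h0
  have hM : ∀ z : ℝ × ℝ, (1 + ‖z‖ ^ 2) * |f z| ≤ C0 + C2 := by
    intro z
    have h0 := habs z
    have h2 := hC2 z
    simp only [norm_iteratedFDeriv_zero, Real.norm_eq_abs] at h2
    nlinarith [abs_nonneg (f z), sq_nonneg ‖z‖]
  obtain ⟨C1, hC1pos, hC1'⟩ := (SchwartzMap.fderivCLM ℝ (ℝ × ℝ) ℝ f).decay 0 0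
  have hC1 : ∀ z : ℝ × ℝ, ‖fderiv ℝ (⇑f) z‖ ≤ C1 := by
    intro z
    have := hC1' z
    simpa [norm_iteratedFDeriv_zero, SchwartzMap.fderivCLM_apply] using this
  -- continuity
  have contf : Continuous (⇑f) := f.continuous
  have contDf : Continuous fun z : ℝ × ℝ => fderiv ℝ (⇑f) z :=
    (f.smooth ⊤).continuous_fderiv (by simp)
  -- integrability facts on ℝ²
  have intf : Integrable (⇑f) (volume : Measure (ℝ × ℝ)) := f.integrable
  have int_absf : Integrable (fun z : ℝ × ℝ => |f z|) volume := intf.abs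
  have int_nDf : Integrable (fun z : ℝ × ℝ => ‖fderiv ℝ (⇑f) z‖) volume := by
    have h1 := ((SchwartzMap.fderivCLM ℝ (ℝ × ℝ) ℝ f).integrable (μ := volume)).norm
    simpa [SchwartzMap.fderivCLM_apply] using h1
  have int_h : Integrable (fun z : ℝ × ℝ => 2 * |f z| * ‖fderiv ℝ (⇑f) z‖) volume := by
    have h1 : Integrable (fun z : ℝ × ℝ => (2 * |f z|) * ‖fderiv ℝ (⇑f) z‖) volume := by
      refine int_nDf.bdd_mul (continuous_const.mul contf.abs).aestronglyMeasurable
        (c := 2 * C0) (Filter.Eventually.of_forall fun z => ?_)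
      have h2 := habs z
      have h3 := abs_nonneg (f z)
      rw [Real.norm_of_nonneg (by positivity)]
      linarith
    exact h1
  have int_f2 : Integrable (fun z : ℝ × ℝ => f z ^ 2) volume := by
    have h1 : Integrable (fun z : ℝ × ℝ => f z * f z) volume := by
      refine intf.bdd_mul contf.aestronglyMeasurable (c := C0) (Filter.Eventually.of_forall fun z => ?_)
      rw [Real.norm_eq_abs]; exact habs z
    simpa [sq] using h1
  have epow : ∀ a : ℝ, |a| ^ 4 = a ^ 2 * a ^ 2 := by
    intro a
    rw [show (4:ℕ) = 2 * 2 from rfl, pow_mul, sq_abs]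
    ring
  have int_f4 : Integrable (fun z : ℝ × ℝ => |f z| ^ 4) volume := by
    have h1 : Integrable (fun z : ℝ × ℝ => f z ^ 2 * f z ^ 2) volume := by
      refine int_f2.bdd_mul (contf.pow 2).aestronglyMeasurable (c := C0 ^ 2) (Filter.Eventually.of_forall fun z => ?_)
      rw [Real.norm_of_nonneg (sq_nonneg _), ← sq_abs]
      exact pow_le_pow_left₀ (abs_nonneg _) (habs z) 2
    have h2 : (fun z : ℝ × ℝ => |f z| ^ 4) = fun z : ℝ × ℝ => f z ^ 2 * f z ^ 2 := by
      funext z; exact epow (f z)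
    rw [h2]; exact h1
  have int_nDf2 : Integrable (fun z : ℝ × ℝ => ‖fderiv ℝ (⇑f) z‖ ^ 2) volume := by
    have h1 : Integrable
        (fun z : ℝ × ℝ => ‖fderiv ℝ (⇑f) z‖ * ‖fderiv ℝ (⇑f) z‖) volume := by
      refine int_nDf.bdd_mul contDf.norm.aestronglyMeasurable (c := C1) (Filter.Eventually.of_forall fun z => ?_)
      rw [Real.norm_of_nonneg (norm_nonneg _)]; exact hC1 z
    simpa [sq] using h1
  -- product structure
  have hvol : (volume : Measure (ℝ × ℝ)) = (volume : Measure ℝ).prod volume :=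
    MeasureTheory.Measure.volume_eq_prod ℝ ℝ
  have int_h' : Integrable (fun z : ℝ × ℝ => 2 * |f z| * ‖fderiv ℝ (⇑f) z‖)
      ((volume : Measure ℝ).prod volume) := by rwa [← hvol]
  -- marginals
  have hG_int : Integrable
      (fun x : ℝ => ∫ s : ℝ, 2 * |f (x, s)| * ‖fderiv ℝ (⇑f) (x, s)‖) volume :=
    int_h'.integral_prod_left
  have hF_int : Integrable
      (fun y : ℝ => ∫ t : ℝ, 2 * |f (t, y)| * ‖fderiv ℝ (⇑f) (t, y)‖) volume :=
    int_h'.integral_prod_right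
  have hF_nonneg : ∀ y : ℝ,
      0 ≤ ∫ t : ℝ, 2 * |f (t, y)| * ‖fderiv ℝ (⇑f) (t, y)‖ := fun y =>
    integral_nonneg fun t => by positivity
  have hG_nonneg : ∀ x : ℝ,
      0 ≤ ∫ s : ℝ, 2 * |f (x, s)| * ‖fderiv ℝ (⇑f) (x, s)‖ := fun x =>
    integral_nonneg fun s => by positivity
  -- step 1 : ∫ f⁴ ≤ (∫ 2|f|‖Df‖)²
  have step1 : (∫ z : ℝ × ℝ, |f z| ^ 4)
      ≤ (∫ z : ℝ × ℝ, 2 * |f z| * ‖fderiv ℝ (⇑f) z‖) ^ 2 := by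
    have hGF_int : Integrable (fun z : ℝ × ℝ =>
        (∫ s : ℝ, 2 * |f (z.1, s)| * ‖fderiv ℝ (⇑f) (z.1, s)‖) *
        (∫ t : ℝ, 2 * |f (t, z.2)| * ‖fderiv ℝ (⇑f) (t, z.2)‖)) volume := by
      rw [hvol]; exact hG_int.mul_prod hF_int
    have h1 : (∫ z : ℝ × ℝ, |f z| ^ 4) ≤ ∫ z : ℝ × ℝ,
        (∫ s : ℝ, 2 * |f (z.1, s)| * ‖fderiv ℝ (⇑f) (z.1, s)‖) *
        (∫ t : ℝ, 2 * |f (t, z.2)| * ‖fderiv ℝ (⇑f) (t, z.2)‖) := by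
      refine integral_mono int_f4 hGF_int fun z => ?_
      rw [epow (f z)]
      have k1 : f z ^ 2 ≤ ∫ t : ℝ, 2 * |f (t, z.2)| * ‖fderiv ℝ (⇑f) (t, z.2)‖ := by
        simpa using slice_bound_fst f hM hC1 z.1 z.2
      have k2 : f z ^ 2 ≤ ∫ s : ℝ, 2 * |f (z.1, s)| * ‖fderiv ℝ (⇑f) (z.1, s)‖ := by
        simpa using slice_bound_snd f hM hC1 z.1 z.2
      exact mul_le_mul k2 k1 (sq_nonneg _) (hG_nonneg z.1)
    have h2 : (∫ z : ℝ × ℝ,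
        (∫ s : ℝ, 2 * |f (z.1, s)| * ‖fderiv ℝ (⇑f) (z.1, s)‖) *
        (∫ t : ℝ, 2 * |f (t, z.2)| * ‖fderiv ℝ (⇑f) (t, z.2)‖))
        = (∫ x : ℝ, ∫ s : ℝ, 2 * |f (x, s)| * ‖fderiv ℝ (⇑f) (x, s)‖) *
          (∫ y : ℝ, ∫ t : ℝ, 2 * |f (t, y)| * ‖fderiv ℝ (⇑f) (t, y)‖) := by
      rw [hvol]
      exact integral_prod_mul
        (fun x : ℝ => ∫ s : ℝ, 2 * |f (x, s)| * ‖fderiv ℝ (⇑f) (x, s)‖)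
        (fun y : ℝ => ∫ t : ℝ, 2 * |f (t, y)| * ‖fderiv ℝ (⇑f) (t, y)‖)
    have h3 : (∫ x : ℝ, ∫ s : ℝ, 2 * |f (x, s)| * ‖fderiv ℝ (⇑f) (x, s)‖)
        = ∫ z : ℝ × ℝ, 2 * |f z| * ‖fderiv ℝ (⇑f) z‖ := by
      rw [hvol]
      exact integral_integral int_h'
    have h4 : (∫ y : ℝ, ∫ t : ℝ, 2 * |f (t, y)| * ‖fderiv ℝ (⇑f) (t, y)‖)
        = ∫ z : ℝ × ℝ, 2 * |f z| * ‖fderiv ℝ (⇑f) z‖ := by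
      rw [hvol]
      rw [← integral_integral_swap int_h']
      exact integral_integral int_h'
    calc (∫ z : ℝ × ℝ, |f z| ^ 4) ≤ _ := h1
      _ = _ := h2
      _ = (∫ z : ℝ × ℝ, 2 * |f z| * ‖fderiv ℝ (⇑f) z‖) ^ 2 := by rw [h3, h4, sq]
  -- step 2 : Cauchy–Schwarz
  have hconj : Real.HolderConjugate 2 2 := ⟨by norm_num, by norm_num, by norm_num⟩
  have hmem1 : MemLp (fun z : ℝ × ℝ => |f z|) (ENNReal.ofReal 2) volume := by
    rw [ENNReal.ofReal_ofNat]
    refine (memLp_two_iff_integrable_sq contf.abs.aestronglyMeasurable).2 ?_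
    have h : (fun z : ℝ × ℝ => |f z| ^ 2) = fun z : ℝ × ℝ => f z ^ 2 := by
      funext z; exact sq_abs (f z)
    rw [h]; exact int_f2
  have hmem2 : MemLp (fun z : ℝ × ℝ => ‖fderiv ℝ (⇑f) z‖) (ENNReal.ofReal 2) volume := by
    rw [ENNReal.ofReal_ofNat]
    exact (memLp_two_iff_integrable_sq contDf.norm.aestronglyMeasurable).2 int_nDf2
  have hCS : (∫ z : ℝ × ℝ, |f z| * ‖fderiv ℝ (⇑f) z‖)
      ≤ (∫ z : ℝ × ℝ, |f z| ^ (2:ℝ)) ^ ((1:ℝ)/2)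
        * (∫ z : ℝ × ℝ, ‖fderiv ℝ (⇑f) z‖ ^ (2:ℝ)) ^ ((1:ℝ)/2) :=
    integral_mul_le_Lp_mul_Lq_of_nonneg hconj
      (Filter.Eventually.of_forall fun z => abs_nonneg _)
      (Filter.Eventually.of_forall fun z => norm_nonneg _) hmem1 hmem2
  -- clean up the rpow-2's
  have e1 : (∫ z : ℝ × ℝ, |f z| ^ (2:ℝ)) = ∫ z : ℝ × ℝ, f z ^ 2 := by
    apply integral_congr_ae
    filter_upwards with z
    rw [show ((2:ℝ)) = ((2:ℕ):ℝ) by norm_num, Real.rpow_natCast]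
    exact sq_abs (f z)
  have e2 : (∫ z : ℝ × ℝ, ‖fderiv ℝ (⇑f) z‖ ^ (2:ℝ))
      = ∫ z : ℝ × ℝ, ‖fderiv ℝ (⇑f) z‖ ^ 2 := by
    apply integral_congr_ae
    filter_upwards with z
    rw [show ((2:ℝ)) = ((2:ℕ):ℝ) by norm_num, Real.rpow_natCast]
  rw [e1, e2] at hCS
  -- put everything together
  set A := ∫ z : ℝ × ℝ, f z ^ 2 with hA
  set B := ∫ z : ℝ × ℝ, ‖fderiv ℝ (⇑f) z‖ ^ 2 with hB
  set T := ∫ z : ℝ × ℝ, |f z| ^ 4 with hT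
  have hA0 : 0 ≤ A := integral_nonneg fun z => sq_nonneg _
  have hB0 : 0 ≤ B := integral_nonneg fun z => sq_nonneg _
  have hT0 : 0 ≤ T := integral_nonneg fun z => by positivity
  have hI0 : 0 ≤ ∫ z : ℝ × ℝ, |f z| * ‖fderiv ℝ (⇑f) z‖ :=
    integral_nonneg fun z => by positivity
  have hint2 : (∫ z : ℝ × ℝ, 2 * |f z| * ‖fderiv ℝ (⇑f) z‖)
      = 2 * ∫ z : ℝ × ℝ, |f z| * ‖fderiv ℝ (⇑f) z‖ := by
    rw [← integral_const_mul]
    apply integral_congr_ae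
    filter_upwards with z
    ring
  have hA2 : (A ^ ((1:ℝ)/2)) ^ (2:ℕ) = A := by
    rw [← Real.rpow_natCast (A ^ ((1:ℝ)/2)) 2, ← Real.rpow_mul hA0]
    norm_num
  have hB2 : (B ^ ((1:ℝ)/2)) ^ (2:ℕ) = B := by
    rw [← Real.rpow_natCast (B ^ ((1:ℝ)/2)) 2, ← Real.rpow_mul hB0]
    norm_num
  have hTAB : T ≤ 4 * (A * B) := by
    have h5 : T ≤ (2 * ∫ z : ℝ × ℝ, |f z| * ‖fderiv ℝ (⇑f) z‖) ^ 2 := by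
      rw [← hint2]; exact step1
    have h6 : (∫ z : ℝ × ℝ, |f z| * ‖fderiv ℝ (⇑f) z‖) ^ 2
        ≤ (A ^ ((1:ℝ)/2) * B ^ ((1:ℝ)/2)) ^ 2 := by
      exact pow_le_pow_left₀ hI0 hCS 2
    have h7 : (A ^ ((1:ℝ)/2) * B ^ ((1:ℝ)/2)) ^ 2 = A * B := by
      rw [mul_pow, hA2, hB2]
    nlinarith [hI0]
  have hAB0 : 0 ≤ 4 * (A * B) := by positivity
  calc T ^ ((1:ℝ)/4) ≤ (4 * (A * B)) ^ ((1:ℝ)/4) :=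
        Real.rpow_le_rpow hT0 hTAB (by norm_num)
    _ = (4:ℝ) ^ ((1:ℝ)/4) * (A ^ ((1:ℝ)/4) * B ^ ((1:ℝ)/4)) := by
        rw [Real.mul_rpow (by norm_num) (mul_nonneg hA0 hB0), Real.mul_rpow hA0 hB0]
    _ ≤ 2 * (A ^ ((1:ℝ)/4) * B ^ ((1:ℝ)/4)) := by
        have h8 : (4:ℝ) ^ ((1:ℝ)/4) ≤ 2 := by
          have hx0 : 0 ≤ (4:ℝ) ^ ((1:ℝ)/4) := Real.rpow_nonneg (by norm_num) _
          have hx4 : ((4:ℝ) ^ ((1:ℝ)/4)) ^ (4:ℕ) = 4 := by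
            rw [← Real.rpow_natCast ((4:ℝ) ^ ((1:ℝ)/4)) 4,
              ← Real.rpow_mul (by norm_num : (0:ℝ) ≤ 4)]
            norm_num
          nlinarith [hx4, hx0, sq_nonneg ((4:ℝ) ^ ((1:ℝ)/4) - 2),
            sq_nonneg ((4:ℝ) ^ ((1:ℝ)/4) + 2), sq_nonneg (((4:ℝ) ^ ((1:ℝ)/4)) ^ 2 - 4)]
        exact mul_le_mul_of_nonneg_right h8 (by positivity)
    _ = 2 * A ^ ((1:ℝ)/4) * B ^ ((1:ℝ)/4) := by ring
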